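/- Let K ≥ 1 and N_t ≥ 1 be integers, ρ > 0 a real number, H̃ a real (2K) × (2N_t) matrix, and ‖H̃‖ its ℓ²→ℓ² operator norm. Then for every vector x ∈ ℝ^{2N_t} with ‖x‖² = N_t, one has ∏_{ℓ=1}^{2K} Φ(√(2ρ/N_t)·(H̃x)_ℓ) ≤ Φ(√(ρ/K)·‖H̃‖)^{2K}. -/

import Mathlib

open scoped BigOperators

/-- The standard normal cumulative distribution function
`Φ(t) = ∫_{−∞}^{t} (1/√(2π)) e^{−τ²/2} dτ`. -/
noncomputable def stdNormalCDF (t : ℝ) : ℝ :=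
  ∫ τ in Set.Iic t, (Real.sqrt (2 * Real.pi))⁻¹ * Real.exp (-τ ^ 2 / 2)

/-- The `ℓ²→ℓ²` operator norm of a real matrix. -/
noncomputable def l2OpNorm {m n : ℕ} (A : Matrix (Fin m) (Fin n) ℝ) : ℝ :=
  ‖LinearMap.toContinuousLinearMap (Matrix.toEuclideanLin A)‖

namespace LikelihoodAux

open MeasureTheory Real Set Filter

/-- Standard normal pdf. -/
noncomputable def phi (τ : ℝ) : ℝ := (Real.sqrt (2 * Real.pi))⁻¹ * Real.exp (-τ ^ 2 / 2)

lemma sqrt2pi_pos : 0 < Real.sqrt (2 * Real.pi) :=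
  Real.sqrt_pos.2 (by positivity)

lemma phi_pos (t : ℝ) : 0 < phi t := by
  have h := sqrt2pi_pos
  unfold phi; positivity

lemma phi_cont : Continuous phi := by
  unfold phi; fun_prop

lemma integrable_phi : Integrable phi := by
  have h := (integrable_exp_neg_mul_sq (by norm_num : (0:ℝ) < 1/2)).const_mul
      (Real.sqrt (2 * Real.pi))⁻¹
  refine h.congr (Filter.Eventually.of_forall fun x => ?_)
  unfold phi; ring_nf

lemma integrable_id_mul_phi : Integrable (fun τ : ℝ => τ * phi τ) := by
  have h := (integrable_mul_exp_neg_mul_sq (by norm_num : (0:ℝ) < 1/2)).const_mul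
      (Real.sqrt (2 * Real.pi))⁻¹
  refine h.congr (Filter.Eventually.of_forall fun x => ?_)
  unfold phi; ring_nf

lemma hasDerivAt_phi (t : ℝ) : HasDerivAt phi (-t * phi t) t := by
  have h1 : HasDerivAt (fun τ : ℝ => -τ ^ 2 / 2) (-t) t := by
    have h := ((hasDerivAt_pow 2 t).neg).div_const 2
    refine h.congr_deriv ?_
    push_cast
    ring
  have h2 := (h1.exp).const_mul (Real.sqrt (2 * Real.pi))⁻¹
  unfold phi
  refine h2.congr_deriv ?_
  ring

lemma tendsto_phi_atBot : Tendsto phi atBot (nhds 0) := by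
  have h1 : Tendsto (fun τ : ℝ => -τ ^ 2 / 2) atBot atBot := by
    apply tendsto_atBot_mono' atBot ?_ tendsto_id
    filter_upwards [eventually_le_atBot (-2:ℝ)] with τ hτ
    show -τ ^ 2 / 2 ≤ τ
    nlinarith
  have h2 : Tendsto (fun τ : ℝ => Real.exp (-τ ^ 2 / 2)) atBot (nhds 0) :=
    Real.tendsto_exp_atBot.comp h1
  have := h2.const_mul (Real.sqrt (2 * Real.pi))⁻¹
  unfold phi
  simpa using this

lemma Phi_eq (t : ℝ) : stdNormalCDF t = ∫ τ in Set.Iic t, phi τ := rfl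

lemma Phi_nonneg (t : ℝ) : 0 ≤ stdNormalCDF t := by
  rw [Phi_eq]
  exact setIntegral_nonneg measurableSet_Iic fun τ _ => (phi_pos τ).le

lemma Phi_pos (t : ℝ) : 0 < stdNormalCDF t := by
  rw [Phi_eq]
  rw [setIntegral_pos_iff_support_of_nonneg_ae
      (Filter.Eventually.of_forall fun τ => (phi_pos τ).le) integrable_phi.integrableOn]
  have hs : Function.support phi = Set.univ := by
    ext τ; simp [(phi_pos τ).ne']
  rw [hs, Set.univ_inter]
  simp

lemma Phi_mono : Monotone stdNormalCDF := by
  intro s t hst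
  rw [Phi_eq, Phi_eq]
  exact setIntegral_mono_set integrable_phi.integrableOn
    (Filter.Eventually.of_forall fun τ => (phi_pos τ).le)
    (HasSubset.Subset.eventuallyLE (Set.Iic_subset_Iic.2 hst))

lemma hasDerivAt_Phi (t : ℝ) : HasDerivAt stdNormalCDF (phi t) t := by
  have key : ∀ s : ℝ, stdNormalCDF s = stdNormalCDF 0 + ∫ τ in (0:ℝ)..s, phi τ := by
    intro s
    have h := intervalIntegral.integral_Iic_sub_Iic (integrable_phi.integrableOn)
      (integrable_phi.integrableOn) (a := 0) (b := s)
    rw [Phi_eq, Phi_eq]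
    linarith
  have h2 : HasDerivAt (fun s : ℝ => stdNormalCDF 0 + ∫ τ in (0:ℝ)..s, phi τ) (phi t) t := by
    refine HasDerivAt.const_add _ (intervalIntegral.integral_hasDerivAt_right
      (integrable_phi.intervalIntegrable)
      (phi_cont.aestronglyMeasurable.stronglyMeasurableAtFilter)
      phi_cont.continuousAt)
  exact h2.congr_of_eventuallyEq (Filter.Eventually.of_forall key)

/-- Mills-type inequality: `t·Φ(t) + φ(t) ≥ 0`. -/
lemma mills (t : ℝ) : 0 ≤ t * stdNormalCDF t + phi t := by
  rcases le_or_gt 0 t with ht | ht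
  · have := Phi_nonneg t
    have := phi_pos t
    nlinarith
  · -- compute ∫_{-∞}^t τ φ(τ) dτ = -φ(t)
    have hI : ∫ τ in Set.Iic t, τ * phi τ = -phi t := by
      have hderiv : ∀ x ∈ Set.Iic t, HasDerivAt (fun τ => -phi τ) (x * phi x) x := by
        intro x _
        have := (hasDerivAt_phi x).neg
        exact this.congr_deriv (by ring)
      have := integral_Iic_of_hasDerivAt_of_tendsto' hderiv
        integrable_id_mul_phi.integrableOn (by simpa using tendsto_phi_atBot.neg)
      simpa using this
    have hcomp : stdNormalCDF t ≤ ∫ τ in Set.Iic t, t⁻¹ * (τ * phi τ) := by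
      rw [Phi_eq]
      refine setIntegral_mono_on integrable_phi.integrableOn
        (integrable_id_mul_phi.integrableOn.const_mul _) measurableSet_Iic ?_
      intro τ hτ
      have hτt : τ ≤ t := hτ
      have h1 : 1 ≤ t⁻¹ * τ := by
        rw [← div_eq_inv_mul, le_div_iff_of_neg ht]
        simpa using hτt
      have := mul_le_mul_of_nonneg_right h1 (phi_pos τ).le
      calc phi τ = 1 * phi τ := (one_mul _).symm
        _ ≤ t⁻¹ * τ * phi τ := this
        _ = t⁻¹ * (τ * phi τ) := by ring
    rw [integral_const_mul, hI] at hcomp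
    have h2 := mul_le_mul_of_nonpos_left hcomp ht.le
    have h3 : t * (t⁻¹ * -phi t) = -phi t := by
      rw [← mul_assoc, mul_inv_cancel₀ ht.ne, one_mul]
    nlinarith [phi_pos t]

lemma hasDerivAt_logPhi (t : ℝ) :
    HasDerivAt (fun s => Real.log (stdNormalCDF s)) (phi t / stdNormalCDF t) t :=
  (hasDerivAt_Phi t).log (Phi_pos t).ne'

lemma deriv_logPhi :
    deriv (fun s => Real.log (stdNormalCDF s)) = fun t => phi t / stdNormalCDF t :=
  funext fun t => (hasDerivAt_logPhi t).deriv

lemma hasDerivAt_ratio (t : ℝ) :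
    HasDerivAt (fun s => phi s / stdNormalCDF s)
      ((-t * phi t * stdNormalCDF t - phi t * phi t) / stdNormalCDF t ^ 2) t :=
  (hasDerivAt_phi t).div (hasDerivAt_Phi t) (Phi_pos t).ne'

lemma logPhi_concave : ConcaveOn ℝ Set.univ (fun t => Real.log (stdNormalCDF t)) := by
  apply concaveOn_univ_of_deriv2_nonpos
  · exact fun t => (hasDerivAt_logPhi t).differentiableAt
  · rw [deriv_logPhi]
    exact fun t => (hasDerivAt_ratio t).differentiableAt
  · intro t
    have h2 : deriv^[2] (fun s => Real.log (stdNormalCDF s)) t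
        = deriv (deriv (fun s => Real.log (stdNormalCDF s))) t := rfl
    rw [h2, deriv_logPhi, (hasDerivAt_ratio t).deriv]
    apply div_nonpos_of_nonpos_of_nonneg
    · nlinarith [phi_pos t, mills t]
    · positivity

/-- Geometric-mean bound: if the arithmetic mean of `a` is at most `b`, then
`∏ Φ(a ℓ) ≤ Φ(b)^n`, by log-concavity of `Φ`. -/
lemma prod_Phi_le {n : ℕ} (hn : 0 < n) (a : Fin n → ℝ) (b : ℝ)
    (hab : (n : ℝ)⁻¹ * ∑ ℓ, a ℓ ≤ b) :
    ∏ ℓ, stdNormalCDF (a ℓ) ≤ stdNormalCDF b ^ n := by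
  have hnpos : (0:ℝ) < n := by exact_mod_cast hn
  have hjensen : ∑ ℓ, (n:ℝ)⁻¹ • Real.log (stdNormalCDF (a ℓ))
      ≤ Real.log (stdNormalCDF (∑ ℓ, (n:ℝ)⁻¹ • a ℓ)) := by
    apply logPhi_concave.le_map_sum (fun _ _ => by positivity) ?_ (fun _ _ => Set.mem_univ _)
    rw [Finset.sum_const]
    simp only [Finset.card_univ, Fintype.card_fin, nsmul_eq_mul]
    field_simp
  have hmean : ∑ ℓ, (n:ℝ)⁻¹ • a ℓ = (n:ℝ)⁻¹ * ∑ ℓ, a ℓ := by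
    rw [Finset.mul_sum]
    exact Finset.sum_congr rfl fun ℓ _ => by simp [smul_eq_mul]
  have hlogsum : ∑ ℓ, Real.log (stdNormalCDF (a ℓ)) ≤ (n:ℝ) * Real.log (stdNormalCDF b) := by
    have h4 : Real.log (stdNormalCDF (∑ ℓ, (n:ℝ)⁻¹ • a ℓ)) ≤ Real.log (stdNormalCDF b) := by
      apply Real.log_le_log (Phi_pos _)
      exact Phi_mono (by rw [hmean]; exact hab)
    have h5 : ∑ ℓ, (n:ℝ)⁻¹ • Real.log (stdNormalCDF (a ℓ))
        = (n:ℝ)⁻¹ * ∑ ℓ, Real.log (stdNormalCDF (a ℓ)) := by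
      rw [Finset.mul_sum]
      exact Finset.sum_congr rfl fun ℓ _ => by simp [smul_eq_mul]
    have h6 := hjensen.trans h4
    rw [h5] at h6
    calc ∑ ℓ, Real.log (stdNormalCDF (a ℓ))
        = (n:ℝ) * ((n:ℝ)⁻¹ * ∑ ℓ, Real.log (stdNormalCDF (a ℓ))) := by
          field_simp
      _ ≤ (n:ℝ) * Real.log (stdNormalCDF b) := by
          exact mul_le_mul_of_nonneg_left h6 hnpos.le
  calc ∏ ℓ, stdNormalCDF (a ℓ)
      = Real.exp (∑ ℓ, Real.log (stdNormalCDF (a ℓ))) := by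
        rw [Real.exp_sum]
        exact Finset.prod_congr rfl fun ℓ _ => (Real.exp_log (Phi_pos _)).symm
    _ ≤ Real.exp ((n:ℝ) * Real.log (stdNormalCDF b)) := Real.exp_le_exp.2 hlogsum
    _ = stdNormalCDF b ^ n := by
        rw [Real.exp_nat_mul, Real.exp_log (Phi_pos _)]

end LikelihoodAux

open LikelihoodAux MeasureTheory Real Set in
/-- Lemma 1: for every `x ∈ ℝ^{2N_t}` with `‖x‖² = N_t`, the likelihood
`∏_{ℓ=1}^{2K} Φ(√(2ρ/N_t)·(H̃x)_ℓ)` is upper bounded by `Φ(√(ρ/K)·‖H̃‖)^{2K}`. -/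
theorem likelihood_upper_bound (K Nt : ℕ) (hK : 1 ≤ K) (hNt : 1 ≤ Nt) (ρ : ℝ) (hρ : 0 < ρ)
    (Htil : Matrix (Fin (2 * K)) (Fin (2 * Nt)) ℝ)
    (x : EuclideanSpace ℝ (Fin (2 * Nt))) (hx : ‖x‖ ^ 2 = (Nt : ℝ)) :
    ∏ ℓ, stdNormalCDF (Real.sqrt (2 * ρ / Nt) * Htil.mulVec x ℓ) ≤
      (stdNormalCDF (Real.sqrt (ρ / K) * l2OpNorm Htil)) ^ (2 * K) := by
  have hKpos : (0:ℝ) < K := by exact_mod_cast hK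
  have hNtpos : (0:ℝ) < Nt := by exact_mod_cast hNt
  refine prod_Phi_le (by omega) _ _ ?_
  set c : ℝ := Real.sqrt (2 * ρ / Nt) with hc
  set N : ℝ := l2OpNorm Htil with hN
  have hN0 : 0 ≤ N := norm_nonneg _
  have hn2 : ((2 * K : ℕ) : ℝ) = 2 * (K:ℝ) := by push_cast; ring
  have hnpos : (0:ℝ) < ((2 * K : ℕ) : ℝ) := by rw [hn2]; positivity
  -- operator norm bound on the sum of squares
  have hsumsq : ∑ ℓ, (Htil.mulVec x ℓ) ^ 2 ≤ N ^ 2 * Nt := by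
    set L := LinearMap.toContinuousLinearMap (Matrix.toEuclideanLin Htil) with hL
    have hLx : ∀ ℓ, (L x) ℓ = Htil.mulVec x ℓ := fun ℓ => rfl
    have h1 : ‖L x‖ ≤ N * ‖x‖ := L.le_opNorm x
    have h2 : ‖L x‖ ^ 2 = ∑ ℓ, (Htil.mulVec x ℓ) ^ 2 := by
      rw [EuclideanSpace.norm_eq, Real.sq_sqrt (by positivity)]
      exact Finset.sum_congr rfl fun ℓ _ => by rw [hLx ℓ, Real.norm_eq_abs, sq_abs]
    have h3 : ‖L x‖ ^ 2 ≤ (N * ‖x‖) ^ 2 := pow_le_pow_left₀ (norm_nonneg (L x)) h1 2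
    rw [h2] at h3
    calc ∑ ℓ, (Htil.mulVec x ℓ) ^ 2 ≤ (N * ‖x‖) ^ 2 := h3
      _ = N ^ 2 * ‖x‖ ^ 2 := by ring
      _ = N ^ 2 * Nt := by rw [hx]
  have hc2 : c ^ 2 = 2 * ρ / Nt := Real.sq_sqrt (by positivity)
  have hsa : ∑ ℓ, (c * Htil.mulVec x ℓ) ^ 2 ≤ 2 * ρ * N ^ 2 := by
    have he : ∑ ℓ, (c * Htil.mulVec x ℓ) ^ 2 = c ^ 2 * ∑ ℓ, (Htil.mulVec x ℓ) ^ 2 := by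
      rw [Finset.mul_sum]
      exact Finset.sum_congr rfl fun ℓ _ => by ring
    rw [he, hc2]
    calc 2 * ρ / Nt * ∑ ℓ, (Htil.mulVec x ℓ) ^ 2
        ≤ 2 * ρ / Nt * (N ^ 2 * Nt) := by
          exact mul_le_mul_of_nonneg_left hsumsq (by positivity)
      _ = 2 * ρ * N ^ 2 := by field_simp
  have hCS : (∑ ℓ, c * Htil.mulVec x ℓ) ^ 2
      ≤ ((2 * K : ℕ) : ℝ) * ∑ ℓ, (c * Htil.mulVec x ℓ) ^ 2 := by
    have := sq_sum_le_card_mul_sum_sq (s := (Finset.univ : Finset (Fin (2 * K))))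
      (f := fun ℓ => c * Htil.mulVec x ℓ)
    simpa using this
  have h1 : ∑ ℓ, c * Htil.mulVec x ℓ ≤ Real.sqrt (((2 * K : ℕ) : ℝ) * (2 * ρ * N ^ 2)) := by
    have h2 : (∑ ℓ, c * Htil.mulVec x ℓ) ^ 2 ≤ ((2 * K : ℕ) : ℝ) * (2 * ρ * N ^ 2) :=
      hCS.trans (mul_le_mul_of_nonneg_left hsa hnpos.le)
    calc ∑ ℓ, c * Htil.mulVec x ℓ ≤ |∑ ℓ, c * Htil.mulVec x ℓ| := le_abs_self _
      _ = Real.sqrt ((∑ ℓ, c * Htil.mulVec x ℓ) ^ 2) := (Real.sqrt_sq_eq_abs _).symm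
      _ ≤ Real.sqrt (((2 * K : ℕ) : ℝ) * (2 * ρ * N ^ 2)) := Real.sqrt_le_sqrt h2
  have h3 : (((2 * K : ℕ) : ℝ))⁻¹ * Real.sqrt (((2 * K : ℕ) : ℝ) * (2 * ρ * N ^ 2))
      = Real.sqrt (ρ / K) * N := by
    rw [show (((2 * K : ℕ) : ℝ))⁻¹ = Real.sqrt ((((2 * K : ℕ) : ℝ))⁻¹ ^ 2) from
      (Real.sqrt_sq (by positivity)).symm, ← Real.sqrt_mul (by positivity),
      show Real.sqrt (ρ / K) * N = Real.sqrt (ρ / K * N ^ 2) by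
        rw [Real.sqrt_mul (by positivity), Real.sqrt_sq hN0]]
    congr 1
    rw [hn2]
    field_simp
  calc (((2 * K : ℕ) : ℝ))⁻¹ * ∑ ℓ, c * Htil.mulVec x ℓ
      ≤ (((2 * K : ℕ) : ℝ))⁻¹ * Real.sqrt (((2 * K : ℕ) : ℝ) * (2 * ρ * N ^ 2)) :=
        mul_le_mul_of_nonneg_left h1 (by positivity)
    _ = Real.sqrt (ρ / K) * N := h3
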